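/- arXiv:1311.3935 — 3 statements merged into one kernel-verified Lean document; each statement's English description precedes it below -/
import Mathlib

section
/- Let 0 < α < 1 and let w_n^(α) = (−1)^n·C(α,n) be the Grünwald weights. Then for every integer n ≥ 2: e^(−(α+1)²·(π²/6 − 5/4))·α·(1−α)·2^α / n^(α+1) < |w_n^(α)| < α·2^(α+1)/(n+1)^(α+1). -/
open Real Finset

set_option maxHeartbeats 1000000



lemma log_one_sub_ge {x : ℝ} (h0 : 0 ≤ x) (h1 : x ≤ 2/3) :
    -x - x^2 ≤ Real.log (1 - x) := by
  have hab : |x| < 1 := by rw [abs_of_nonneg h0]; linarith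
  have key := Real.abs_log_sub_add_sum_range_le hab 13
  rw [abs_le] at key
  have hrem : |x|^(13+1) / (1 - |x|) ≤ 3 * x^14 := by
    rw [abs_of_nonneg h0]
    rw [div_le_iff₀ (by linarith)]
    have h3 : (1:ℝ) ≤ 3*(1-x) := by linarith
    calc x^(13+1) = x^14 * 1 := by ring
    _ ≤ x^14 * (3*(1-x)) := mul_le_mul_of_nonneg_left h3 (pow_nonneg h0 14)
    _ = 3 * x^14 * (1-x) := by ring
  have hsum : ∑ i ∈ range 13, x ^ (i+1) / (i+1) + Real.log (1-x) ≥ -(3 * x^14) := by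
    linarith [key.1]
  have hx : ∀ j : ℕ, x ^ (j+2) ≤ (2/3:ℝ)^j * x^2 := by
    intro j
    have h1' : x ^ j ≤ (2/3:ℝ)^j := pow_le_pow_left₀ h0 h1 j
    calc x ^ (j+2) = x^j * x^2 := by ring
    _ ≤ (2/3:ℝ)^j * x^2 := by nlinarith [sq_nonneg x, pow_nonneg h0 j]
  have e1 := hx 1; have e2 := hx 2; have e3 := hx 3; have e4 := hx 4
  have e5 := hx 5; have e6 := hx 6; have e7 := hx 7; have e8 := hx 8
  have e9 := hx 9; have e10 := hx 10; have e11 := hx 11; have e12 := hx 12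
  simp only [Finset.sum_range_succ, Finset.sum_range_zero] at hsum
  norm_num at hsum e1 e2 e3 e4 e5 e6 e7 e8 e9 e10 e11 e12 ⊢
  nlinarith [hsum, e1, e2, e3, e4, e5, e6, e7, e8, e9, e10, e11, e12]

/-- The Grünwald weights `w_n^(α) = (-1)^n * C(α, n)`. -/
noncomputable def grunwaldW (α : ℝ) (n : ℕ) : ℝ :=
  (-1) ^ n * (Real.Gamma (α + 1) / (Real.Gamma ((n : ℝ) + 1) * Real.Gamma (α - (n : ℝ) + 1)))




lemma gamma_sub_nat_ne_zero {α : ℝ} (hα0 : 0 < α) (hα1 : α < 1) (n : ℕ) :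
    Real.Gamma (α - n) ≠ 0 := by
  apply Real.Gamma_ne_zero
  intro m h
  rcases lt_or_ge m n with hmn | hmn
  · have : (m:ℝ) + 1 ≤ (n:ℝ) := by exact_mod_cast hmn
    linarith
  · have : (n:ℝ) ≤ (m:ℝ) := by exact_mod_cast hmn
    linarith

lemma grunwaldW_succ {α : ℝ} (hα0 : 0 < α) (hα1 : α < 1) (n : ℕ) :
    grunwaldW α (n+1) = grunwaldW α n * (1 - (α+1)/((n:ℝ)+1)) := by
  have hΓn : Real.Gamma ((n:ℝ)+1) ≠ 0 :=
    (Real.Gamma_pos_of_pos (by positivity)).ne'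
  have hαn : α - (n:ℝ) ≠ 0 := by
    intro h
    rcases Nat.eq_zero_or_pos n with h0 | h0
    · subst h0; simp at h; exact hα0.ne' h
    · have : (1:ℝ) ≤ (n:ℝ) := by exact_mod_cast h0
      linarith
  have hΓαn : Real.Gamma (α - (n:ℝ)) ≠ 0 := gamma_sub_nat_ne_zero hα0 hα1 n
  have hn1 : ((n:ℝ) + 1) ≠ 0 := by positivity
  simp only [grunwaldW, Nat.cast_add, Nat.cast_one]
  have h1 : Real.Gamma ((n:ℝ) + 1 + 1) = ((n:ℝ)+1) * Real.Gamma ((n:ℝ)+1) :=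
    Real.Gamma_add_one hn1
  have h2 : α - ((n:ℝ) + 1) + 1 = α - (n:ℝ) := by ring
  have h3 : Real.Gamma (α - (n:ℝ) + 1) = (α - (n:ℝ)) * Real.Gamma (α - (n:ℝ)) :=
    Real.Gamma_add_one hαn
  rw [h1, h2, h3, pow_succ]
  field_simp
  ring

lemma grunwaldW_closed {α : ℝ} (hα0 : 0 < α) (hα1 : α < 1) :
    ∀ n : ℕ, 1 ≤ n →
      grunwaldW α n = -(α * ∏ k ∈ Finset.Icc 2 n, (1 - (α+1)/(k:ℝ))) := by
  intro n hn
  induction n with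
  | zero => omega
  | succ m ih =>
    rcases Nat.lt_or_ge m 1 with hm | hm
    · interval_cases m
      simp only [grunwaldW]
      rw [show Finset.Icc 2 1 = (∅ : Finset ℕ) by rfl]
      simp only [Finset.prod_empty]
      have : Real.Gamma (α - (1:ℕ) + 1) = Real.Gamma α := by norm_num
      rw [this]
      have hΓ2 : Real.Gamma ((1:ℕ) + 1 : ℝ) = 1 := by
        norm_num [Real.Gamma_two]
      rw [Real.Gamma_add_one hα0.ne', hΓ2]
      have hΓα : Real.Gamma α ≠ 0 := Real.Gamma_pos_of_pos hα0 |>.ne'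
      field_simp
      norm_num
    · rw [grunwaldW_succ hα0 hα1 m, ih hm,
        Finset.prod_Icc_succ_top (by omega : 2 ≤ m + 1)]
      push_cast
      ring



lemma harmonic_lower : ∀ n : ℕ, 1 ≤ n →
    Real.log ((n:ℝ)+1) - Real.log 2 ≤ ∑ k ∈ Finset.Icc 2 n, 1/(k:ℝ) := by
  intro n hn
  induction n with
  | zero => omega
  | succ m ih =>
    rcases Nat.lt_or_ge m 1 with hm | hm
    · interval_cases m
      norm_num
    · have hstep : Real.log ((m:ℝ)+1+1) - Real.log ((m:ℝ)+1) ≤ 1/((m:ℝ)+1) := by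
        have hpos : (0:ℝ) < ((m:ℝ)+1+1)/((m:ℝ)+1) := by positivity
        have := Real.log_le_sub_one_of_pos hpos
        rw [Real.log_div (by positivity) (by positivity)] at this
        have h1 : ((m:ℝ)+1+1)/((m:ℝ)+1) - 1 = 1/((m:ℝ)+1) := by
          field_simp
          ring
        linarith [this, h1.le]
      rw [Finset.sum_Icc_succ_top (by omega : 2 ≤ m + 1)]
      push_cast
      have := ih hm
      linarith
lemma harmonic_upper : ∀ n : ℕ, 2 ≤ n →
    ∑ k ∈ Finset.Icc 3 n, 1/(k:ℝ) ≤ Real.log n - Real.log 2 := by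
  intro n hn
  induction n with
  | zero => omega
  | succ m ih =>
    rcases Nat.lt_or_ge m 2 with hm | hm
    · interval_cases m
      · omega
      · norm_num
    · have hm0 : (0:ℝ) < (m:ℝ) := by positivity
      have hstep : 1/((m:ℝ)+1) ≤ Real.log ((m:ℝ)+1) - Real.log m := by
        have hpos : (0:ℝ) < (m:ℝ)/((m:ℝ)+1) := by positivity
        have := Real.log_le_sub_one_of_pos hpos
        rw [Real.log_div (by positivity) (by positivity)] at this
        have h1 : (m:ℝ)/((m:ℝ)+1) - 1 = -(1/((m:ℝ)+1)) := by
          field_simp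
          ring
        linarith
      rw [Finset.sum_Icc_succ_top (by omega : 3 ≤ m + 1)]
      push_cast
      have := ih hm
      linarith

lemma basel_partial : ∀ n : ℕ, 2 ≤ n →
    ∑ k ∈ Finset.Icc 3 n, 1/(k:ℝ)^2 < Real.pi^2/6 - 5/4 := by
  have hEq : ∀ n : ℕ, 2 ≤ n →
      ∑ k ∈ Finset.range (n+1), 1/(k:ℝ)^2 = 5/4 + ∑ k ∈ Finset.Icc 3 n, 1/(k:ℝ)^2 := by
    intro n hn
    induction n with
    | zero => omega
    | succ m ih =>
      rcases Nat.lt_or_ge m 2 with hm | hm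
      · interval_cases m
        · omega
        · norm_num [Finset.sum_range_succ]
      · rw [Finset.sum_range_succ, ih hm,
          Finset.sum_Icc_succ_top (by omega : 3 ≤ m + 1)]
        push_cast
        ring
  intro n hn
  have h1 : ∑ k ∈ Finset.range (n+2), 1/(k:ℝ)^2 ≤ Real.pi^2/6 :=
    sum_le_hasSum _ (fun i _ => by positivity) hasSum_zeta_two
  rw [Finset.sum_range_succ, hEq n hn] at h1
  have h2 : (0:ℝ) < 1/((n:ℝ)+1)^2 := by positivity
  push_cast at h1
  linarith

/-- upper and lower bounds for the Grünwald weights. -/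
theorem grunwaldW_bounds (α : ℝ) (hα0 : 0 < α) (hα1 : α < 1) :
    ∀ n : ℕ, 2 ≤ n →
      Real.exp (-(α + 1) ^ 2 * (Real.pi ^ 2 / 6 - 5 / 4)) *
          (α * (1 - α) * (2 : ℝ) ^ α) / (n : ℝ) ^ (α + 1) < |grunwaldW α n| ∧
      |grunwaldW α n| < α * (2 : ℝ) ^ (α + 1) / ((n : ℝ) + 1) ^ (α + 1) := by
  intro n hn
  set β : ℝ := α + 1 with hβ
  have hβ1 : 1 < β := by simp [hβ]; linarith
  have hβ2 : β < 2 := by simp [hβ]; linarith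
  have hn1 : (1:ℝ) ≤ (n:ℝ) := by exact_mod_cast le_trans (by norm_num) hn
  have hn2 : (2:ℝ) ≤ (n:ℝ) := by exact_mod_cast hn
  -- positivity of factors
  have hfac : ∀ k ∈ Finset.Icc 2 n, (0:ℝ) < 1 - β/(k:ℝ) := by
    intro k hk
    simp only [Finset.mem_Icc] at hk
    have hk2 : (2:ℝ) ≤ (k:ℝ) := by exact_mod_cast hk.1
    have hk0 : (0:ℝ) < (k:ℝ) := by linarith
    have : β/(k:ℝ) < 1 := by
      rw [div_lt_one hk0]; linarith
    linarith
  set P : ℝ := ∏ k ∈ Finset.Icc 2 n, (1 - β/(k:ℝ)) with hP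
  have hPpos : 0 < P := Finset.prod_pos hfac
  have habs : |grunwaldW α n| = α * P := by
    rw [grunwaldW_closed hα0 hα1 n (by omega), abs_neg,
      abs_of_pos (mul_pos hα0 hPpos)]
  have hlogP : Real.log P = ∑ k ∈ Finset.Icc 2 n, Real.log (1 - β/(k:ℝ)) :=
    Real.log_prod (fun k hk => (hfac k hk).ne')
  constructor
  · -- LOWER BOUND
    -- split P = (1 - β/2) * ∏_{Icc 3 n}
    have hsplit : Finset.Icc 2 n = insert 2 (Finset.Icc 3 n) := by
      ext k; simp only [Finset.mem_Icc, Finset.mem_insert]; omega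
    have h2notin : 2 ∉ Finset.Icc 3 n := by simp
    have hPsplit : P = (1 - β/2) * ∏ k ∈ Finset.Icc 3 n, (1 - β/(k:ℝ)) := by
      rw [hP, hsplit, Finset.prod_insert h2notin]; norm_num
    set Q : ℝ := ∏ k ∈ Finset.Icc 3 n, (1 - β/(k:ℝ)) with hQ
    have hfac3 : ∀ k ∈ Finset.Icc 3 n, (0:ℝ) < 1 - β/(k:ℝ) := fun k hk => by
      apply hfac; simp only [Finset.mem_Icc] at hk ⊢; omega
    have hQpos : 0 < Q := Finset.prod_pos hfac3
    have hlogQ : Real.log Q = ∑ k ∈ Finset.Icc 3 n, Real.log (1 - β/(k:ℝ)) :=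
      Real.log_prod (fun k hk => (hfac3 k hk).ne')
    have hterm : ∀ k ∈ Finset.Icc 3 n,
        -(β/(k:ℝ)) - β^2/(k:ℝ)^2 ≤ Real.log (1 - β/(k:ℝ)) := by
      intro k hk
      simp only [Finset.mem_Icc] at hk
      have hk3 : (3:ℝ) ≤ (k:ℝ) := by exact_mod_cast hk.1
      have hk0 : (0:ℝ) < (k:ℝ) := by linarith
      have h0 : 0 ≤ β/(k:ℝ) := by positivity
      have h1 : β/(k:ℝ) ≤ 2/3 := by
        rw [div_le_div_iff₀ hk0 (by norm_num)]
        nlinarith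
      have hlg := log_one_sub_ge h0 h1
      have heq2 : (β/(k:ℝ))^2 = β^2/(k:ℝ)^2 := div_pow β _ 2
      linarith [hlg, heq2.le, heq2.ge]
    have hsum : ∑ k ∈ Finset.Icc 3 n, (-(β/(k:ℝ)) - β^2/(k:ℝ)^2)
        ≤ Real.log Q := by
      rw [hlogQ]; exact Finset.sum_le_sum hterm
    have hdistrib : ∑ k ∈ Finset.Icc 3 n, (-(β/(k:ℝ)) - β^2/(k:ℝ)^2)
        = -(β * ∑ k ∈ Finset.Icc 3 n, 1/(k:ℝ)) - β^2 * ∑ k ∈ Finset.Icc 3 n, 1/(k:ℝ)^2 := by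
      rw [Finset.mul_sum, Finset.mul_sum, ← Finset.sum_neg_distrib, ← Finset.sum_sub_distrib]
      exact Finset.sum_congr rfl fun k _ => by ring
    have hH := harmonic_upper n hn
    have hB := basel_partial n hn
    have hβpos : (0:ℝ) < β := by linarith
    have hlogQ_lb : -β^2 * (Real.pi^2/6 - 5/4) + β * Real.log 2 - β * Real.log n
        < Real.log Q := by
      have t1 : -(β * ∑ k ∈ Finset.Icc 3 n, 1/(k:ℝ))
          ≥ -(β * (Real.log n - Real.log 2)) := by
        have := mul_le_mul_of_nonneg_left hH hβpos.le
        linarith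
      have t2 : -(β^2 * ∑ k ∈ Finset.Icc 3 n, 1/(k:ℝ)^2)
          > -(β^2 * (Real.pi^2/6 - 5/4)) := by
        have := mul_lt_mul_of_pos_left hB (by positivity : (0:ℝ) < β^2)
        linarith
      calc -β^2 * (Real.pi^2/6 - 5/4) + β * Real.log 2 - β * Real.log n
          = -(β * (Real.log n - Real.log 2)) + -(β^2 * (Real.pi^2/6 - 5/4)) := by ring
        _ < -(β * ∑ k ∈ Finset.Icc 3 n, 1/(k:ℝ))
            + -(β^2 * ∑ k ∈ Finset.Icc 3 n, 1/(k:ℝ)^2) := by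
            have := t1; have := t2; linarith
        _ = ∑ k ∈ Finset.Icc 3 n, (-(β/(k:ℝ)) - β^2/(k:ℝ)^2) := by
            rw [hdistrib]; ring
        _ ≤ Real.log Q := hsum
    have hQ_lb : Real.exp (-β^2 * (Real.pi^2/6 - 5/4)) * 2^β / (n:ℝ)^β < Q := by
      have := Real.exp_lt_exp.mpr hlogQ_lb
      rw [Real.exp_log hQpos] at this
      have heq : Real.exp (-β^2 * (Real.pi^2/6 - 5/4) + β * Real.log 2 - β * Real.log n)
          = Real.exp (-β^2 * (Real.pi^2/6 - 5/4)) * 2^β / (n:ℝ)^β := by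
        rw [Real.exp_sub, Real.exp_add]
        congr 1
        · congr 1
          rw [mul_comm β (Real.log 2), ← Real.rpow_def_of_pos (by norm_num : (0:ℝ) < 2)]
        · rw [mul_comm β (Real.log n), ← Real.rpow_def_of_pos (by linarith : (0:ℝ) < (n:ℝ))]
      rw [heq] at this
      exact this
    -- assemble
    have hnpow : (0:ℝ) < (n:ℝ)^β := Real.rpow_pos_of_pos (by linarith) β
    rw [habs, hPsplit]
    rw [div_lt_iff₀ hnpow]
    have h1α : (0:ℝ) < 1 - β/2 := by
      simp only [hβ]; linarith
    have key : α * ((1 - β/2) * Q) * (n:ℝ)^β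
        > α * ((1 - β/2) * (Real.exp (-β^2 * (Real.pi^2/6 - 5/4)) * 2^β / (n:ℝ)^β)) * (n:ℝ)^β := by
      have := mul_lt_mul_of_pos_left hQ_lb (mul_pos hα0 h1α)
      nlinarith [this, hnpow]
    have hsimp : α * ((1 - β/2) * (Real.exp (-β^2 * (Real.pi^2/6 - 5/4)) * 2^β / (n:ℝ)^β)) * (n:ℝ)^β
        = Real.exp (-β^2 * (Real.pi^2/6 - 5/4)) * (α * (1-α) * 2^α) := by
      have h2β : (2:ℝ)^β = 2^α * 2 := by
        rw [hβ, Real.rpow_add (by norm_num : (0:ℝ) < 2), Real.rpow_one]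
      rw [h2β]
      field_simp
      ring
    calc Real.exp (-(α+1)^2 * (Real.pi^2/6 - 5/4)) * (α * (1-α) * 2^α)
        = α * ((1 - β/2) * (Real.exp (-β^2 * (Real.pi^2/6 - 5/4)) * 2^β / (n:ℝ)^β)) * (n:ℝ)^β := by
          rw [hsimp, hβ]
      _ < α * ((1 - β/2) * Q) * (n:ℝ)^β := key
  · -- UPPER BOUND
    have hne : (Finset.Icc 2 n).Nonempty := ⟨2, by simp; omega⟩
    have hterm : ∀ k ∈ Finset.Icc 2 n,
        Real.log (1 - β/(k:ℝ)) < -(β/(k:ℝ)) := by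
      intro k hk
      simp only [Finset.mem_Icc] at hk
      have hk2 : (2:ℝ) ≤ (k:ℝ) := by exact_mod_cast hk.1
      have hk0 : (0:ℝ) < (k:ℝ) := by linarith
      have hx : 0 < β/(k:ℝ) := by positivity
      have h1 : 1 - β/(k:ℝ) ≠ 1 := by
        intro h; nlinarith [hx]
      have hmem : k ∈ Finset.Icc 2 n := by simp only [Finset.mem_Icc]; omega
      have hlt := Real.log_lt_sub_one_of_pos (hfac k hmem) h1
      linarith
    have hsum : Real.log P < ∑ k ∈ Finset.Icc 2 n, -(β/(k:ℝ)) := by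
      rw [hlogP]
      exact Finset.sum_lt_sum_of_nonempty hne hterm
    have hdistrib : ∑ k ∈ Finset.Icc 2 n, -(β/(k:ℝ))
        = -(β * ∑ k ∈ Finset.Icc 2 n, 1/(k:ℝ)) := by
      rw [Finset.mul_sum, ← Finset.sum_neg_distrib]
      exact Finset.sum_congr rfl fun k _ => by ring
    have hH := harmonic_lower n (by omega)
    have hβpos : (0:ℝ) < β := by linarith
    have hlogP_ub : Real.log P < β * Real.log 2 - β * Real.log ((n:ℝ)+1) := by
      rw [hdistrib] at hsum
      have h4 : β * (Real.log ((n:ℝ)+1) - Real.log 2)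
          ≤ β * ∑ k ∈ Finset.Icc 2 n, 1/(k:ℝ) := mul_le_mul_of_nonneg_left hH hβpos.le
      calc Real.log P < -(β * ∑ k ∈ Finset.Icc 2 n, 1/(k:ℝ)) := hsum
        _ ≤ -(β * (Real.log ((n:ℝ)+1) - Real.log 2)) := by linarith
        _ = β * Real.log 2 - β * Real.log ((n:ℝ)+1) := by ring
    have hP_ub : P < 2^β / ((n:ℝ)+1)^β := by
      have := Real.exp_lt_exp.mpr hlogP_ub
      rw [Real.exp_log hPpos] at this
      have heq : Real.exp (β * Real.log 2 - β * Real.log ((n:ℝ)+1))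
          = 2^β / ((n:ℝ)+1)^β := by
        rw [Real.exp_sub]
        congr 1
        · rw [mul_comm β (Real.log 2), ← Real.rpow_def_of_pos (by norm_num : (0:ℝ) < 2)]
        · rw [mul_comm β (Real.log ((n:ℝ)+1)),
            ← Real.rpow_def_of_pos (by linarith : (0:ℝ) < (n:ℝ)+1)]
      rw [heq] at this
      exact this
    rw [habs]
    calc α * P < α * (2^β / ((n:ℝ)+1)^β) := by
          exact mul_lt_mul_of_pos_left hP_ub hα0
      _ = α * 2^(α+1) / ((n:ℝ)+1)^(α+1) := by rw [hβ]; ring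
end

section
/- Let 0 < α < 1, η > 0, N ≥ 2, and let A be the (N−1)×(N−1) real tridiagonal matrix with entries 2 on the main diagonal, −1 on the first diagonals directly above and below the main diagonal, and 0 elsewhere. Set P = I + (1 − α/2)·η·A and Q = I − (η/2)·A. Then P is invertible, and every eigenvalue μ of R = P⁻¹Q satisfies |μ| < 1; that is, the spectral radius of R is strictly less than 1. -/
open Matrix

/-- The (n+1) × n forward-difference matrix. -/
def Bmat (n : ℕ) : Matrix (Fin (n+1)) (Fin n) ℝ :=
  fun i j => (if (i:ℕ) = (j:ℕ) then 1 else 0) - (if (i:ℕ) = (j:ℕ)+1 then 1 else 0)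

lemma sum_ind {n : ℕ} (v : Fin n → ℝ) (a : ℕ) (ha : a < n) :
    ∑ j : Fin n, (if a = (j:ℕ) then (1:ℝ) else 0) * v j = v ⟨a, ha⟩ := by
  rw [Finset.sum_eq_single (⟨a, ha⟩ : Fin n)]
  · simp
  · intro j _ hj
    have : a ≠ (j:ℕ) := by
      intro h; exact hj (Fin.ext h.symm)
    simp [this]
  · simp

lemma sum_ind2 {n : ℕ} (a b : ℕ) (ha : a < n) :
    ∑ i : Fin n, (if (i:ℕ) = a then (1:ℝ) else 0) * (if (i:ℕ) = b then 1 else 0)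
      = if a = b then 1 else 0 := by
  rw [Finset.sum_eq_single (⟨a, ha⟩ : Fin n)]
  · simp
  · intro j _ hj
    have : (j:ℕ) ≠ a := by
      intro h; exact hj (Fin.ext h)
    simp [this]
  · simp

lemma tridiag_posdef {n : ℕ} (A : Matrix (Fin n) (Fin n) ℝ)
    (hA : ∀ i j : Fin n, A i j =
      if i = j then 2
      else if (i : ℕ) + 1 = (j : ℕ) ∨ (j : ℕ) + 1 = (i : ℕ) then -1
      else 0)
    (v : Fin n → ℝ) (hv : v ≠ 0) : 0 < v ⬝ᵥ (A *ᵥ v) := by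
  have hAB : A = (Bmat n)ᵀ * Bmat n := by
    ext j k
    rw [hA]
    simp only [Matrix.mul_apply, Matrix.transpose_apply, Bmat]
    simp only [sub_mul, mul_sub, Finset.sum_sub_distrib]
    rw [sum_ind2 (j:ℕ) (k:ℕ) (by omega), sum_ind2 (j:ℕ) ((k:ℕ)+1) (by omega),
        sum_ind2 ((j:ℕ)+1) (k:ℕ) (by omega), sum_ind2 ((j:ℕ)+1) ((k:ℕ)+1) (by omega)]
    have hjk : (j = k) ↔ ((j:ℕ) = (k:ℕ)) := by
      constructor
      · intro h; rw [h]
      · intro h; exact Fin.ext h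
    rw [show (if j = k then (2:ℝ) else if (j:ℕ)+1 = (k:ℕ) ∨ (k:ℕ)+1 = (j:ℕ) then -1 else 0)
        = (if (j:ℕ) = (k:ℕ) then (2:ℝ) else if (j:ℕ)+1 = (k:ℕ) ∨ (k:ℕ)+1 = (j:ℕ) then -1 else 0)
      from by rw [if_congr hjk rfl rfl]]
    split_ifs <;> first | (exfalso; omega) | norm_num
  have hBinj : ∀ w : Fin n → ℝ, Bmat n *ᵥ w = 0 → w = 0 := by
    intro w hw
    have key : ∀ m, ∀ hm : m < n, w ⟨m, hm⟩ = 0 := by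
      intro m
      induction m using Nat.strong_induction_on with
      | _ m ih =>
        intro hm
        have hrow := congrFun hw ⟨m, by omega⟩
        simp only [Matrix.mulVec, dotProduct, Bmat, Pi.zero_apply] at hrow
        simp only [sub_mul, Finset.sum_sub_distrib] at hrow
        rw [sum_ind w m hm] at hrow
        match m, hm with
        | 0, hm =>
          simpa using hrow
        | k+1, hm =>
          have hk : k < n := by omega
          have hcond : ∀ j : Fin n, (if k+1 = (j:ℕ)+1 then (1:ℝ) else 0)
              = (if k = (j:ℕ) then 1 else 0) := by
            intro j
            simp [Nat.add_right_cancel_iff]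
          rw [Finset.sum_congr rfl (fun j _ => by rw [hcond j])] at hrow
          rw [sum_ind w k hk] at hrow
          have := ih k (by omega) hk
          linarith
    funext i
    have := key i.val i.isLt
    simpa using this
  have hquad : v ⬝ᵥ (A *ᵥ v) = (Bmat n *ᵥ v) ⬝ᵥ (Bmat n *ᵥ v) := by
    rw [hAB, ← Matrix.mulVec_mulVec, Matrix.dotProduct_mulVec, Matrix.vecMul_transpose]
  have hBv : Bmat n *ᵥ v ≠ 0 := fun h => hv (hBinj v h)
  rw [hquad]
  have hnn : 0 ≤ (Bmat n *ᵥ v) ⬝ᵥ (Bmat n *ᵥ v) :=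
    Finset.sum_nonneg fun i _ => mul_self_nonneg _
  have hne : (Bmat n *ᵥ v) ⬝ᵥ (Bmat n *ᵥ v) ≠ 0 := by
    intro h
    exact hBv (dotProduct_self_eq_zero.mp h)
  exact lt_of_le_of_ne hnn (Ne.symm hne)

lemma dot_self_pos {n : ℕ} (v : Fin n → ℝ) (hv : v ≠ 0) : 0 < v ⬝ᵥ v := by
  have hnn : 0 ≤ v ⬝ᵥ v := Finset.sum_nonneg fun i _ => mul_self_nonneg _
  have hne : v ⬝ᵥ v ≠ 0 := fun h => hv (dotProduct_self_eq_zero.mp h)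
  exact lt_of_le_of_ne hnn (Ne.symm hne)

/-- `P = I + (1 - α/2)·η·A` is invertible and the spectral radius of
`R = P⁻¹ Q` with `Q = I - (η/2)·A` is strictly less than `1`. -/
theorem spectral_radius_lt_one
    (α η : ℝ) (N : ℕ) (hα0 : 0 < α) (hα1 : α < 1) (hη : 0 < η) (hN : 2 ≤ N)
    (A : Matrix (Fin (N - 1)) (Fin (N - 1)) ℝ)
    (hA : ∀ i j : Fin (N - 1), A i j =
      if i = j then 2
      else if (i : ℕ) + 1 = (j : ℕ) ∨ (j : ℕ) + 1 = (i : ℕ) then -1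
      else 0) :
    IsUnit (1 + ((1 - α / 2) * η) • A) ∧
    ∀ μ ∈ spectrum ℝ ((1 + ((1 - α / 2) * η) • A)⁻¹ * (1 - (η / 2) • A)),
      |μ| < 1 := by
  set c : ℝ := (1 - α / 2) * η with hcdef
  have hc : η / 2 < c := by
    rw [hcdef]; nlinarith
  have hc0 : 0 < c := by
    rw [hcdef]; nlinarith
  set P : Matrix (Fin (N-1)) (Fin (N-1)) ℝ := 1 + c • A with hPdef
  set Q : Matrix (Fin (N-1)) (Fin (N-1)) ℝ := 1 - (η / 2) • A with hQdef
  have hPform : ∀ v : Fin (N-1) → ℝ,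
      v ⬝ᵥ (P *ᵥ v) = v ⬝ᵥ v + c * (v ⬝ᵥ (A *ᵥ v)) := by
    intro v
    rw [hPdef]
    rw [Matrix.add_mulVec, Matrix.one_mulVec, dotProduct_add,
        Matrix.smul_mulVec, dotProduct_smul, smul_eq_mul]
  have hPdet : P.det ≠ 0 := by
    intro h
    obtain ⟨v, hv, hPv⟩ := (Matrix.exists_mulVec_eq_zero_iff).mpr h
    have ha := tridiag_posdef A hA v hv
    have hs := dot_self_pos v hv
    have := hPform v
    rw [hPv, dotProduct_zero] at this
    nlinarith
  have hPunit : IsUnit P := (Matrix.isUnit_iff_isUnit_det P).mpr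
    (isUnit_iff_ne_zero.mpr hPdet)
  refine ⟨hPunit, ?_⟩
  intro μ hμ
  rw [spectrum.mem_iff] at hμ
  have hdet1 : (algebraMap ℝ (Matrix (Fin (N-1)) (Fin (N-1)) ℝ) μ - P⁻¹ * Q).det = 0 := by
    by_contra h
    exact hμ ((Matrix.isUnit_iff_isUnit_det _).mpr (isUnit_iff_ne_zero.mpr h))
  have hPP : P * P⁻¹ = 1 := Matrix.mul_nonsing_inv P (isUnit_iff_ne_zero.mpr hPdet)
  have key : (μ • P - Q).det = 0 := by
    have heq : μ • P - Q = P * (algebraMap ℝ (Matrix (Fin (N-1)) (Fin (N-1)) ℝ) μ - P⁻¹ * Q) := by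
      rw [Algebra.algebraMap_eq_smul_one, mul_sub, mul_smul_comm, mul_one,
          ← mul_assoc, hPP, one_mul]
    rw [heq, Matrix.det_mul, hdet1, mul_zero]
  obtain ⟨v, hv, hvv⟩ := (Matrix.exists_mulVec_eq_zero_iff).mpr key
  have ha := tridiag_posdef A hA v hv
  have hs := dot_self_pos v hv
  have hquad : v ⬝ᵥ ((μ • P - Q) *ᵥ v)
      = μ * (v ⬝ᵥ v + c * (v ⬝ᵥ (A *ᵥ v))) - (v ⬝ᵥ v - η / 2 * (v ⬝ᵥ (A *ᵥ v))) := by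
    rw [Matrix.sub_mulVec, dotProduct_sub, Matrix.smul_mulVec,
        dotProduct_smul, smul_eq_mul, hPform v, hQdef]
    rw [Matrix.sub_mulVec, Matrix.one_mulVec, dotProduct_sub,
        Matrix.smul_mulVec, dotProduct_smul, smul_eq_mul]
  rw [hvv, dotProduct_zero] at hquad
  set s : ℝ := v ⬝ᵥ v
  set a : ℝ := v ⬝ᵥ (A *ᵥ v)
  have hD : 0 < s + c * a := by nlinarith [mul_pos hc0 ha]
  have h1 : 0 < (c - η / 2) * a := mul_pos (by linarith) ha
  rw [abs_lt]
  constructor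
  · nlinarith [hD, h1, hquad, hs]
  · nlinarith [hD, h1, hquad, hs]
end

section
/- Let R and S be square real matrices of the same size and let ‖·‖ be a submultiplicative matrix norm. If ‖Rⁿ‖ → 0 and ‖Sⁿ‖ → 0 as n → ∞, then there exists a positive integer J such that ‖R^k · S^(J−k)‖ < 1 for every integer k with 0 ≤ k ≤ J. -/
/-- if `‖Rⁿ‖ → 0` and `‖Sⁿ‖ → 0` for a submultiplicative matrix norm,
then there is a positive integer `J` with `‖R^k S^(J-k)‖ < 1` for all `0 ≤ k ≤ J`. -/
theorem exists_J_mixed_powers_norm_lt_one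
    (m : ℕ) (R S : Matrix (Fin m) (Fin m) ℝ)
    (nrm : Matrix (Fin m) (Fin m) ℝ → ℝ)
    (hnonneg : ∀ X, 0 ≤ nrm X)
    (hsub : ∀ X Y, nrm (X * Y) ≤ nrm X * nrm Y)
    (hR : Filter.Tendsto (fun n : ℕ => nrm (R ^ n)) Filter.atTop (nhds 0))
    (hS : Filter.Tendsto (fun n : ℕ => nrm (S ^ n)) Filter.atTop (nhds 0)) :
    ∃ J : ℕ, 0 < J ∧ ∀ k : ℕ, k ≤ J → nrm (R ^ k * S ^ (J - k)) < 1 := by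
  -- eventually small bounds for ε = 1
  have hdist : ∀ (f : ℕ → ℝ), Filter.Tendsto f Filter.atTop (nhds 0) →
      (∀ n, 0 ≤ f n) → ∀ ε : ℝ, 0 < ε → ∃ N, ∀ n ≥ N, f n < ε := by
    intro f hf hf0 ε hε
    obtain ⟨N, hN⟩ := Metric.tendsto_atTop.mp hf ε hε
    refine ⟨N, fun n hn => ?_⟩
    have := hN n hn
    rw [Real.dist_eq, sub_zero, abs_of_nonneg (hf0 n)] at this
    exact this
  obtain ⟨N1, hN1⟩ := hdist _ hR (fun n => hnonneg _) 1 one_pos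
  obtain ⟨N2, hN2⟩ := hdist _ hS (fun n => hnonneg _) 1 one_pos
  set M : ℝ := 1 + ((Finset.range N1).sum fun n => nrm (R ^ n)) +
      ((Finset.range N2).sum fun n => nrm (S ^ n)) with hMdef
  have hsum1 : 0 ≤ (Finset.range N1).sum fun n => nrm (R ^ n) :=
    Finset.sum_nonneg fun n _ => hnonneg _
  have hsum2 : 0 ≤ (Finset.range N2).sum fun n => nrm (S ^ n) :=
    Finset.sum_nonneg fun n _ => hnonneg _
  have hM1 : (1 : ℝ) ≤ M := by simp only [hMdef]; linarith
  have hMpos : (0 : ℝ) < M := lt_of_lt_of_le one_pos hM1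
  have hMR : ∀ n, nrm (R ^ n) ≤ M := by
    intro n
    by_cases h : n < N1
    · have : nrm (R ^ n) ≤ (Finset.range N1).sum fun j => nrm (R ^ j) :=
        Finset.single_le_sum (fun j _ => hnonneg _) (Finset.mem_range.mpr h)
      simp only [hMdef]; linarith
    · have := hN1 n (le_of_not_gt h)
      simp only [hMdef]; linarith
  have hMS : ∀ n, nrm (S ^ n) ≤ M := by
    intro n
    by_cases h : n < N2
    · have : nrm (S ^ n) ≤ (Finset.range N2).sum fun j => nrm (S ^ j) :=
        Finset.single_le_sum (fun j _ => hnonneg _) (Finset.mem_range.mpr h)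
      simp only [hMdef]; linarith
    · have := hN2 n (le_of_not_gt h)
      simp only [hMdef]; linarith
  have hMinv : (0 : ℝ) < 1 / M := by positivity
  obtain ⟨K1, hK1⟩ := hdist _ hR (fun n => hnonneg _) (1 / M) hMinv
  obtain ⟨K2, hK2⟩ := hdist _ hS (fun n => hnonneg _) (1 / M) hMinv
  set N := max K1 K2 with hN
  refine ⟨2 * N + 1, Nat.succ_pos _, fun k hk => ?_⟩
  have hle := hsub (R ^ k) (S ^ (2 * N + 1 - k))
  have hcancel : (1 / M) * M = 1 := by field_simp
  by_cases h : N ≤ k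
  · have hsmall : nrm (R ^ k) < 1 / M := hK1 k (le_trans (le_max_left _ _) h)
    calc nrm (R ^ k * S ^ (2 * N + 1 - k)) ≤ nrm (R ^ k) * nrm (S ^ (2 * N + 1 - k)) := hle
      _ ≤ nrm (R ^ k) * M := mul_le_mul_of_nonneg_left (hMS _) (hnonneg _)
      _ < (1 / M) * M := mul_lt_mul_of_pos_right hsmall hMpos
      _ = 1 := hcancel
  · have hbig : N ≤ 2 * N + 1 - k := by omega
    have hsmall : nrm (S ^ (2 * N + 1 - k)) < 1 / M :=
      hK2 _ (le_trans (le_max_right _ _) hbig)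
    calc nrm (R ^ k * S ^ (2 * N + 1 - k)) ≤ nrm (R ^ k) * nrm (S ^ (2 * N + 1 - k)) := hle
      _ ≤ M * nrm (S ^ (2 * N + 1 - k)) := mul_le_mul_of_nonneg_right (hMR _) (hnonneg _)
      _ < M * (1 / M) := mul_lt_mul_of_pos_left hsmall hMpos
      _ = 1 := by field_simp
end
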